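/- The pair û₀(t,x) = x/(t−1), û₁(t,x) = C₁/(2t−2) satisfies the stochastic Galerkin system for Burgers' equation with K = 1: ∂_t û₀ + ∂_x ((û₀² + û₁²)/2) = 0 and ∂_t û₁ + ∂_x (û₀ û₁) = 0, for all x ∈ ℝ and t < 1, where C₁ is any real constant. -/

import Mathlib

/-- The pair `û₀(t,x) = x/(t−1)`, `û₁(t,x) = C₁/(2t−2)` is an exact solution of
the `K = 1` stochastic Galerkin system for Burgers' equation:
`∂_t û₀ + ∂_x((û₀² + û₁²)/2) = 0` and `∂_t û₁ + ∂_x(û₀ û₁) = 0` for `t < 1`. -/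
theorem burgers_sg_exact_solution (C₁ : ℝ) (t x : ℝ) (ht : t < 1) :
    (deriv (fun s : ℝ => x / (s - 1)) t +
        deriv (fun y : ℝ =>
          ((y / (t - 1)) ^ 2 + (C₁ / (2 * t - 2)) ^ 2) / 2) x = 0) ∧
      (deriv (fun s : ℝ => C₁ / (2 * s - 2)) t +
        deriv (fun y : ℝ => (y / (t - 1)) * (C₁ / (2 * t - 2))) x = 0) := by
  have h1 : t - 1 ≠ 0 := sub_ne_zero.mpr (ne_of_lt ht)
  have h2 : 2 * t - 2 ≠ 0 := by intro h; apply h1; linarith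
  have d1 : HasDerivAt (fun s : ℝ => x / (s - 1))
      ((0 * (t - 1) - x * 1) / (t - 1) ^ 2) t :=
    (hasDerivAt_const t x).div ((hasDerivAt_id t).sub_const 1) h1
  have d2 : HasDerivAt (fun y : ℝ =>
      ((y / (t - 1)) ^ 2 + (C₁ / (2 * t - 2)) ^ 2) / 2)
      ((2 * (x / (t - 1)) ^ 1 * (1 / (t - 1)) + 0) / 2) x := by
    have := ((((hasDerivAt_id x).div_const (t - 1)).pow 2).add_const
      ((C₁ / (2 * t - 2)) ^ 2)).div_const 2
    simpa using this
  have d3 : HasDerivAt (fun s : ℝ => C₁ / (2 * s - 2))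
      ((0 * (2 * t - 2) - C₁ * (2 * 1)) / (2 * t - 2) ^ 2) t := by
    have := (hasDerivAt_const t C₁).div
      (((hasDerivAt_id t).const_mul 2).sub_const 2) h2
    exact this
  have d4 : HasDerivAt (fun y : ℝ => (y / (t - 1)) * (C₁ / (2 * t - 2)))
      ((1 / (t - 1)) * (C₁ / (2 * t - 2))) x := by
    have := ((hasDerivAt_id x).div_const (t - 1)).mul_const (C₁ / (2 * t - 2))
    simpa using this
  rw [d1.deriv, d2.deriv, d3.deriv, d4.deriv]
  constructor <;> field_simp <;> ring
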